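/- arXiv:2106.12409 — 2 statements merged into one kernel-verified Lean document; each statement's English description precedes it below -/
import Mathlib

section
/- Let p be an odd prime and K a finite field of characteristic p coprime to 2g+2, and fix a non-square ε ∈ K^×. Every separable polynomial of degree 2g+2 over K can be transformed, by a linear fractional change of variable x and scaling of y, into the form c⁻¹(x^{2g+2} + b x^{2g} + a_{2g−1} x^{2g−1} + ⋯ + a₁ x + a₀) with a_i ∈ K, b ∈ {0, 1, ε}, and c ∈ {1, ε}. -/
/-!
STATEMENT 8: Let `p` be an odd prime and `K` a finite field of characteristic `p`
coprime to `2g+2`, and fix a non-square `ε ∈ K^×`.  Every separable polynomial of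
degree `2g+2` over `K` can be transformed, by a linear change of the homogenized
variables (an element of `GL₂(K)`) and scaling by a square `λ²`, into the form
`c⁻¹ (x^(2g+2) + b x^(2g) + a_(2g−1) x^(2g−1) + ⋯ + a₁ x + a₀)` with `a_i ∈ K`,
`b ∈ {0, 1, ε}` and `c ∈ {1, ε}`.
-/

open MvPolynomial Polynomial

/-- The degree-`n` homogenization of a polynomial as a binary form. -/
noncomputable def homog2 {K : Type} [CommRing K] (n : ℕ) (f : Polynomial K) :
    MvPolynomial (Fin 2) K :=
  ∑ k ∈ Finset.range (n + 1),
    MvPolynomial.C (f.coeff k) * MvPolynomial.X 0 ^ k * MvPolynomial.X 1 ^ (n - k)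

/-- The action of a `2 × 2` matrix on binary forms by linear substitution. -/
noncomputable def glSub {K : Type} [CommRing K] (h : Matrix (Fin 2) (Fin 2) K)
    (F : MvPolynomial (Fin 2) K) : MvPolynomial (Fin 2) K :=
  MvPolynomial.aeval
    (fun i : Fin 2 => MvPolynomial.C (h i 0) * MvPolynomial.X 0 + MvPolynomial.C (h i 1) * MvPolynomial.X 1) F

variable {K : Type} [CommRing K]

lemma homog2_sum {ι : Type*} (n : ℕ) (s : Finset ι) (F : ι → Polynomial K) :
    homog2 n (∑ i ∈ s, F i) = ∑ i ∈ s, homog2 n (F i) := by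
  simp only [homog2, finset_sum_coeff, map_sum, Finset.sum_mul]
  exact Finset.sum_comm

lemma homog2_smul (n : ℕ) (c : K) (f : Polynomial K) :
    homog2 n (c • f) = MvPolynomial.C c * homog2 n f := by
  simp only [homog2, Polynomial.coeff_smul, smul_eq_mul, map_mul, Finset.mul_sum, mul_assoc]

lemma homog2_C_mul_X_pow (n : ℕ) (e : K) (i : ℕ) (hi : i ≤ n) :
    homog2 n (Polynomial.C e * Polynomial.X ^ i) =
      MvPolynomial.C e * MvPolynomial.X 0 ^ i * MvPolynomial.X 1 ^ (n - i) := by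
  rw [homog2, Finset.sum_eq_single i]
  · simp
  · intro k _ hk
    simp [Polynomial.coeff_C_mul, Polynomial.coeff_X_pow, hk]
  · intro h
    exact absurd (Finset.mem_range.mpr (Nat.lt_succ_of_le hi)) h

lemma homog2_C_mul_linear_pow (n : ℕ) (a u t : K) (k : ℕ) (hk : k ≤ n) :
    homog2 n (Polynomial.C a * (Polynomial.C u * Polynomial.X + Polynomial.C t) ^ k) =
      MvPolynomial.C a * (MvPolynomial.C u * MvPolynomial.X 0 + MvPolynomial.C t * MvPolynomial.X 1) ^ k
        * MvPolynomial.X 1 ^ (n - k) := by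
  rw [add_pow, add_pow, Finset.mul_sum, Finset.mul_sum, homog2_sum, Finset.sum_mul]
  refine Finset.sum_congr rfl fun i hi => ?_
  have hik : i ≤ k := Nat.lt_succ_iff.mp (Finset.mem_range.mp hi)
  have h1 : Polynomial.C a * ((Polynomial.C u * Polynomial.X) ^ i * Polynomial.C t ^ (k - i) * (k.choose i : K[X]))
      = Polynomial.C (a * (u ^ i * t ^ (k - i) * (k.choose i : K))) * Polynomial.X ^ i := by
    push_cast
    ring_nf
    rw [← Polynomial.C_pow, ← Polynomial.C_pow]
    push_cast [Polynomial.C_mul]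
    simp [map_natCast]
    ring
  rw [h1, homog2_C_mul_X_pow n _ i (le_trans hik hk)]
  have h3 : n - i = (k - i) + (n - k) := by omega
  rw [h3, pow_add]
  simp only [map_mul, map_pow, mul_pow, map_natCast]
  ring

lemma glSub_homog2 (n : ℕ) (u t : K) (f : Polynomial K) (hf : f.natDegree ≤ n) :
    glSub !![u, t; (0 : K), 1] (homog2 n f) =
      homog2 n (f.comp (Polynomial.C u * Polynomial.X + Polynomial.C t)) := by
  have hcomp : f.comp (Polynomial.C u * Polynomial.X + Polynomial.C t) =
      ∑ k ∈ Finset.range (n + 1), Polynomial.C (f.coeff k) *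
        (Polynomial.C u * Polynomial.X + Polynomial.C t) ^ k := by
    rw [Polynomial.comp, Polynomial.eval₂_eq_sum_range' (Polynomial.C) (Nat.lt_succ_of_le hf)]
  rw [hcomp, homog2_sum]
  rw [glSub, homog2, map_sum]
  refine Finset.sum_congr rfl fun k hk => ?_
  have hkn : k ≤ n := Nat.lt_succ_iff.mp (Finset.mem_range.mp hk)
  rw [homog2_C_mul_linear_pow n _ u t k hkn]
  simp only [map_mul, map_pow, MvPolynomial.aeval_X, MvPolynomial.algHom_C]
  norm_num [Matrix.cons_val_zero, Matrix.cons_val_one, Matrix.head_cons]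

lemma coeff_comp_C_mul_X (p : Polynomial K) (u : K) (k : ℕ) :
    (p.comp (Polynomial.C u * Polynomial.X)).coeff k = p.coeff k * u ^ k := by
  rw [Polynomial.comp, Polynomial.eval₂_eq_sum_range]
  rw [finset_sum_coeff]
  have : ∀ i ∈ Finset.range (p.natDegree + 1),
      (Polynomial.C (p.coeff i) * (Polynomial.C u * Polynomial.X) ^ i).coeff k =
      if k = i then p.coeff i * u ^ i else 0 := by
    intro i _
    rw [mul_pow, ← Polynomial.C_pow, ← mul_assoc, ← Polynomial.C_mul, Polynomial.coeff_C_mul,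
      Polynomial.coeff_X_pow]
    by_cases h : k = i <;> simp [h]
  rw [Finset.sum_congr rfl this, Finset.sum_ite_eq (Finset.range (p.natDegree + 1))]
  by_cases hk : k ∈ Finset.range (p.natDegree + 1)
  · simp [hk]
  · have : p.coeff k = 0 := by
      apply Polynomial.coeff_eq_zero_of_natDegree_lt
      have := Finset.mem_range.not.mp hk
      omega
    simp [hk, this]

lemma coeff_comp_X_add_C (f : Polynomial K) (t : K) (n : ℕ) (hn : 1 ≤ n)
    (hdeg : f.natDegree ≤ n) :
    (f.comp (Polynomial.X + Polynomial.C t)).coeff (n - 1) =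
      f.coeff (n - 1) + (n : K) * f.coeff n * t := by
  rw [← Polynomial.taylor_apply, Polynomial.taylor_coeff]
  have hH : Polynomial.hasseDeriv (n - 1) f =
      Polynomial.C (f.coeff (n - 1)) + Polynomial.C ((n : K) * f.coeff n) * Polynomial.X := by
    ext j
    rw [Polynomial.hasseDeriv_coeff]
    rcases j with _ | _ | j
    · simp [Nat.choose_self]
    · have h1 : 1 + (n - 1) = n := by omega
      have h2 : n.choose (n - 1) = n := by
        rw [← Nat.choose_symm (by omega : n - 1 ≤ n), Nat.sub_sub_self hn, Nat.choose_one_right]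
      simp [h1, h2, Polynomial.coeff_C, mul_comm]
    · have h3 : f.coeff (j + 2 + (n - 1)) = 0 := by
        apply Polynomial.coeff_eq_zero_of_natDegree_lt
        omega
      simp [h3, Polynomial.coeff_C]
  rw [hH]
  simp [mul_assoc]

lemma sq_class {F : Type} [Field F] [Fintype F] (hF : ringChar F ≠ 2)
    (ε x : F) (hε0 : ε ≠ 0) (hε : ¬ IsSquare ε) (hx : x ≠ 0) :
    ∃ e ∈ ({1, ε} : Set F), ∃ r : F, r ≠ 0 ∧ x = e * r ^ 2 := by
  classical
  by_cases h : IsSquare x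
  · obtain ⟨r, hr⟩ := h
    refine ⟨1, Or.inl rfl, r, ?_, by rw [hr]; ring⟩
    intro h0; apply hx; rw [hr, h0, mul_zero]
  · have hxε : x * ε ≠ 0 := mul_ne_zero hx hε0
    have h1 : quadraticChar F x = -1 := quadraticChar_neg_one_iff_not_isSquare.mpr h
    have h2 : quadraticChar F ε = -1 := quadraticChar_neg_one_iff_not_isSquare.mpr hε
    have h3 : quadraticChar F (x * ε) = 1 := by
      rw [map_mul, h1, h2]; ring
    have h4 : IsSquare (x * ε) := (quadraticChar_one_iff_isSquare hxε).mp h3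
    obtain ⟨s, hs⟩ := h4
    have hs0 : s ≠ 0 := by
      intro h0; apply hxε; rw [hs, h0, mul_zero]
    refine ⟨ε, Or.inr rfl, s * ε⁻¹, mul_ne_zero hs0 (inv_ne_zero hε0), ?_⟩
    field_simp
    have : ε * s ^ 2 = (x * ε) * ε := by rw [sq, hs]; ring
    rw [hs]; ring

theorem stmt_8 (p : ℕ) (hp : p.Prime) (hodd : Odd p)
    (K : Type) [Field K] [Fintype K] [CharP K p]
    (g : ℕ) (hcop : Nat.Coprime p (2 * g + 2))
    (ε : K) (hε0 : ε ≠ 0) (hε : ¬ IsSquare ε)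
    (f : Polynomial K) (hsep : f.Separable) (hdeg : f.natDegree = 2 * g + 2) :
    ∃ (h : GL (Fin 2) K) (lam : Kˣ) (b c : K) (a : ℕ → K),
      b ∈ ({0, 1, ε} : Set K) ∧ c ∈ ({1, ε} : Set K) ∧
      glSub (h : Matrix (Fin 2) (Fin 2) K) (homog2 (2 * g + 2) f) =
        MvPolynomial.C ((lam : K) ^ 2) *
          homog2 (2 * g + 2) (c⁻¹ •
            (Polynomial.X ^ (2 * g + 2) + Polynomial.C b * Polynomial.X ^ (2 * g) +
              ∑ i ∈ Finset.range (2 * g), Polynomial.C (a i) * Polynomial.X ^ i)) := by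
  classical
  set n : ℕ := 2 * g + 2 with hn
  -- basic facts
  have hchar : ringChar K = p := ringChar.eq K p
  have hp2 : ringChar K ≠ 2 := by
    rw [hchar]
    rintro rfl
    exact (Nat.odd_iff.mp hodd).symm.trans_ne (by norm_num) rfl
  have hf0 : f ≠ 0 := fun h0 => by simp [h0] at hdeg
  have hl : f.coeff n ≠ 0 := by
    have : f.coeff n = f.leadingCoeff := by rw [Polynomial.leadingCoeff, hdeg]
    rw [this]
    exact Polynomial.leadingCoeff_ne_zero.mpr hf0
  set l : K := f.coeff n with hldef
  have hnK : ((n : ℕ) : K) ≠ 0 := by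
    rw [Ne, CharP.cast_eq_zero_iff K p]
    exact (Nat.Prime.coprime_iff_not_dvd hp).mp hcop
  -- step 1: kill the coefficient in degree n - 1
  set t : K := -(f.coeff (2 * g + 1)) / ((n : K) * l) with htdef
  set f₁ : Polynomial K := f.comp (Polynomial.X + Polynomial.C t) with hf₁
  have hf₁deg : f₁.natDegree = n := by
    rw [hf₁, Polynomial.natDegree_comp, Polynomial.natDegree_X_add_C, mul_one, hdeg]
  have hf₁top : f₁.coeff n = l := by
    have h1 : f₁.leadingCoeff = l := by
      rw [hf₁, Polynomial.leadingCoeff_comp (by rw [Polynomial.natDegree_X_add_C]; norm_num),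
        Polynomial.leadingCoeff_X_add_C, one_pow, mul_one, hldef, Polynomial.leadingCoeff, hdeg]
    rw [← h1, Polynomial.leadingCoeff, hf₁deg]
  have hf₁sub : f₁.coeff (2 * g + 1) = 0 := by
    have h1 := coeff_comp_X_add_C f t n (by omega) (le_of_eq hdeg)
    have e1 : n - 1 = 2 * g + 1 := by omega
    rw [e1] at h1
    rw [hf₁, h1, htdef, ← hldef]
    field_simp
    ring
  set d : K := f₁.coeff (2 * g) with hddef
  -- choose b and u
  have hbu : ∃ b ∈ ({0, 1, ε} : Set K), ∃ u : K, u ≠ 0 ∧ b * l * u ^ 2 = d := by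
    by_cases hd : d = 0
    · exact ⟨0, Or.inl rfl, 1, one_ne_zero, by simp [hd]⟩
    · obtain ⟨e, he, r, hr, hxr⟩ := sq_class hp2 ε (d / l) hε0 hε (div_ne_zero hd hl)
      refine ⟨e, by simpa [Set.mem_insert_iff] using Or.inr he, r, hr, ?_⟩
      have : e * r ^ 2 = d / l := hxr.symm
      field_simp at this ⊢
      linear_combination this
  obtain ⟨b, hb, u, hu, hbul⟩ := hbu
  -- choose c and lam0
  obtain ⟨c, hc, r0, hr0, hlc⟩ := sq_class hp2 ε l hε0 hε hl
  have hc0 : c ≠ 0 := by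
    rcases hc with h | h
    · rw [h]; exact one_ne_zero
    · rw [h]; exact hε0
  have hlam0 : (c * r0) ^ 2 = l * c := by
    rw [hlc]; ring
  set lam0 : K := c * r0 with hlam0def
  have hlam0ne : lam0 ≠ 0 := mul_ne_zero hc0 hr0
  -- set up f₂
  set f₂ : Polynomial K := f₁.comp (Polynomial.C u * Polynomial.X) with hf₂
  have hcompeq : f.comp (Polynomial.C u * Polynomial.X + Polynomial.C t) = f₂ := by
    rw [hf₂, hf₁, Polynomial.comp_assoc]
    congr 1
    simp [Polynomial.add_comp]
  have hf₂coeff : ∀ k, f₂.coeff k = f₁.coeff k * u ^ k := fun k =>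
    coeff_comp_C_mul_X f₁ u k
  set L : K := l * u ^ n with hLdef
  have hL : L ≠ 0 := mul_ne_zero hl (pow_ne_zero _ hu)
  set lam : Kˣ := Units.mk0 (lam0 * u ^ (g + 1)) (mul_ne_zero hlam0ne (pow_ne_zero _ hu)) with hlam
  have hlamsq : ((lam : K)) ^ 2 = L * c := by
    rw [hlam, Units.val_mk0, mul_pow, ← pow_mul, hlam0, hLdef]
    have : (g + 1) * 2 = n := by omega
    rw [this]; ring
  set a : ℕ → K := fun i => L⁻¹ * f₂.coeff i with hadef
  set Q : Polynomial K := Polynomial.X ^ (2 * g + 2) + Polynomial.C b * Polynomial.X ^ (2 * g) +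
      ∑ i ∈ Finset.range (2 * g), Polynomial.C (a i) * Polynomial.X ^ i with hQ
  -- the key coefficient computation
  have hQcoeff : ∀ j, Q.coeff j =
      (if j = 2 * g + 2 then 1 else 0) + (if j = 2 * g then b else 0) +
        (if j < 2 * g then a j else 0) := by
    intro j
    rw [hQ, Polynomial.coeff_add, Polynomial.coeff_add, Polynomial.coeff_X_pow,
      Polynomial.coeff_C_mul, Polynomial.coeff_X_pow, finset_sum_coeff]
    congr 1
    · congr 1
      split <;> simp
    · have : ∀ i ∈ Finset.range (2 * g),
          (Polynomial.C (a i) * Polynomial.X ^ i).coeff j = if j = i then a i else 0 := by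
        intro i _
        rw [Polynomial.coeff_C_mul, Polynomial.coeff_X_pow]
        split <;> simp
      rw [Finset.sum_congr rfl this, Finset.sum_ite_eq (Finset.range (2 * g))]
      simp [Finset.mem_range]
  have hkey : f₂ = L • Q := by
    ext j
    rw [Polynomial.coeff_smul, smul_eq_mul, hQcoeff j, hf₂coeff j]
    rcases lt_trichotomy j (2 * g) with hj | hj | hj
    · simp only [if_neg (by omega : ¬ j = 2 * g + 2), if_neg (by omega : ¬ j = 2 * g),
        if_pos hj]
      rw [hadef]
      simp only []
      rw [← hf₂coeff j]
      field_simp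
      ring
    · subst hj
      rw [if_neg (by omega : ¬ 2 * g = 2 * g + 2), if_pos rfl,
        if_neg (by omega : ¬ 2 * g < 2 * g)]
      rw [← hddef, ← hbul, hLdef, hn]
      ring
    · rcases Nat.lt_or_ge j (2 * g + 2) with hj2 | hj2
      · have hj1 : j = 2 * g + 1 := by omega
        subst hj1
        rw [hf₁sub]
        simp only [if_neg (by omega : ¬ 2 * g + 1 = 2 * g + 2),
          if_neg (by omega : ¬ 2 * g + 1 = 2 * g), if_neg (by omega : ¬ 2 * g + 1 < 2 * g)]
        ring
      · rcases Nat.eq_or_lt_of_le hj2 with hj3 | hj3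
        · subst hj3
          rw [if_pos rfl, if_neg (by omega : ¬ 2 * g + 2 = 2 * g),
            if_neg (by omega : ¬ 2 * g + 2 < 2 * g)]
          have hl2 : f₁.coeff (2 * g + 2) = l := hf₁top
          rw [hl2, hLdef, hn]
          ring
        · have h0 : f₁.coeff j = 0 := by
            apply Polynomial.coeff_eq_zero_of_natDegree_lt
            rw [hf₁deg]; omega
          rw [h0]
          simp only [if_neg (by omega : ¬ j = 2 * g + 2), if_neg (by omega : ¬ j = 2 * g),
            if_neg (by omega : ¬ j < 2 * g)]
          ring
  -- the GL₂ element
  have hdet : Matrix.det !![u, t; (0 : K), 1] ≠ 0 := by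
    rw [Matrix.det_fin_two_of]
    simpa using hu
  refine ⟨Matrix.GeneralLinearGroup.mkOfDetNeZero _ hdet, lam, b, c, a, hb, hc, ?_⟩
  have hcoe : ((Matrix.GeneralLinearGroup.mkOfDetNeZero !![u, t; (0 : K), 1] hdet : GL (Fin 2) K) :
      Matrix (Fin 2) (Fin 2) K) = !![u, t; (0 : K), 1] := rfl
  rw [hcoe, glSub_homog2 n u t f (le_of_eq hdeg), hcompeq, hkey, homog2_smul, homog2_smul,
    ← mul_assoc, ← MvPolynomial.C_mul]
  congr 2
  rw [hlamsq]
  field_simp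
end

section
/- There exists a superspecial curve of genus 4 in characteristic 5; explicitly, the complete intersection in ℙ³ defined by 2yw + z² = 0 and x³ + y³ + w³ = 0 is a non-singular curve of genus 4 whose Hasse–Witt matrix is zero. -/
/-!
STATEMENT 11: There exists a superspecial curve of genus 4 in characteristic 5:
the complete intersection in `ℙ³` defined by `2yw + z² = 0` and `x³ + y³ + w³ = 0`
over `𝔽₂₅` is non-singular (a canonical curve of genus 4) and its Hasse–Witt matrix
is zero, i.e. the coefficients of `x^(5i−i') y^(5j−j') z^(5k−k') w^(5ℓ−ℓ')` in
`(QP)⁴` vanish for all positive `i,j,k,ℓ,i',j',k',ℓ'` with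
`i+j+k+ℓ = i'+j'+k'+ℓ' = 5`.  Non-singularity is expressed by the Jacobian
criterion over an algebraic closure.
-/

open MvPolynomial

instance : Fact (Nat.Prime 5) := ⟨by norm_num⟩

/-- The exponent vector `x^a y^b z^c w^d`. -/
noncomputable def expVec (a b c d : ℕ) : Fin 4 →₀ ℕ :=
  Finsupp.single 0 a + Finsupp.single 1 b + Finsupp.single 2 c + Finsupp.single 3 d

/-- The quadric `2yw + z²` over `𝔽₂₅`. -/
noncomputable def Qss : MvPolynomial (Fin 4) (GaloisField 5 2) :=
  (2 : GaloisField 5 2) • (X 1 * X 3) + X 2 ^ 2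

/-- The cubic `x³ + y³ + w³` over `𝔽₂₅`. -/
noncomputable def Pss : MvPolynomial (Fin 4) (GaloisField 5 2) :=
  X 0 ^ 3 + X 1 ^ 3 + X 3 ^ 3

/- ### Auxiliary machinery -/

noncomputable abbrev mon (k : GaloisField 5 2) (a b c d : ℕ) :
    MvPolynomial (Fin 4) (GaloisField 5 2) :=
  monomial (expVec a b c d) k

lemma mon_eq (k : GaloisField 5 2) (a b c d : ℕ) :
    mon k a b c d = C k * (X 0 ^ a * X 1 ^ b * X 2 ^ c * X 3 ^ d) := by
  simp [mon, expVec, X_pow_eq_monomial, monomial_mul, C_mul_monomial]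

lemma expVec_add (a b c d a' b' c' d' : ℕ) :
    expVec a b c d + expVec a' b' c' d' = expVec (a+a') (b+b') (c+c') (d+d') := by
  simp only [expVec, Finsupp.single_add]; abel

lemma expVec_apply (a b c d : ℕ) :
    expVec a b c d 0 = a ∧ expVec a b c d 1 = b ∧ expVec a b c d 2 = c ∧ expVec a b c d 3 = d := by
  refine ⟨?_, ?_, ?_, ?_⟩ <;> simp [expVec, Finsupp.single_apply]

lemma expVec_eq_iff (a b c d a' b' c' d' : ℕ) :
    expVec a b c d = expVec a' b' c' d' ↔ a = a' ∧ b = b' ∧ c = c' ∧ d = d' := by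
  constructor
  · intro h
    obtain ⟨h0, h1, h2, h3⟩ := expVec_apply a b c d
    obtain ⟨g0, g1, g2, g3⟩ := expVec_apply a' b' c' d'
    exact ⟨by rw [← h0, ← g0, h], by rw [← h1, ← g1, h], by rw [← h2, ← g2, h],
      by rw [← h3, ← g3, h]⟩
  · rintro ⟨rfl, rfl, rfl, rfl⟩; rfl

lemma q4 : Qss ^ 4 =
    mon 1 0 0 8 0 + mon 8 0 1 6 1 + mon 24 0 2 4 2 + mon 32 0 3 2 3 + mon 16 0 4 0 4 := by
  simp only [mon_eq, Qss, smul_eq_C_mul, map_ofNat, map_one]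
  ring

lemma p4 : Pss ^ 4 =
    mon 1 12 0 0 0 + mon 4 9 3 0 0 + mon 6 6 6 0 0 + mon 4 3 9 0 0 + mon 1 0 12 0 0 +
    mon 4 9 0 0 3 + mon 12 6 3 0 3 + mon 12 3 6 0 3 + mon 4 0 9 0 3 +
    mon 6 6 0 0 6 + mon 12 3 3 0 6 + mon 6 0 6 0 6 +
    mon 4 3 0 0 9 + mon 4 0 3 0 9 + mon 1 0 0 0 12 := by
  simp only [mon_eq, Pss, map_ofNat, map_one]
  ring

lemma pderiv_two (i : Fin 4) :
    MvPolynomial.pderiv i (2 : MvPolynomial (Fin 4) (GaloisField 5 2)) = 0 := by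
  rw [show (2 : MvPolynomial (Fin 4) (GaloisField 5 2)) = C 2 from (map_ofNat C 2).symm, pderiv_C]

lemma rank_two {K : Type*} [Field K] (M : Matrix (Fin 2) (Fin 4) K) (j1 j2 : Fin 4)
    (h : M 0 j1 * M 1 j2 - M 0 j2 * M 1 j1 ≠ 0) : M.rank = 2 := by
  refine le_antisymm (M.rank_le_card_height.trans (by simp)) ?_
  set c : Fin 2 → Fin 4 := ![j1, j2] with hc
  set E : Matrix (Fin 4) (Fin 2) K := Matrix.of fun p q => if p = c q then 1 else 0 with hE
  have hme : M * E = M.submatrix id c := by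
    ext p q
    simp [Matrix.mul_apply, hE, Matrix.submatrix]
  have hdet : IsUnit (M.submatrix id c).det := by
    rw [Matrix.det_fin_two]
    simpa [hc, Matrix.submatrix, isUnit_iff_ne_zero] using h
  have h2 : (M.submatrix id c).rank = 2 := by
    rw [Matrix.rank_of_isUnit _ ((Matrix.isUnit_iff_isUnit_det _).2 hdet)]
    simp
  calc (2:ℕ) = (M * E).rank := by rw [hme, h2]
    _ ≤ M.rank := Matrix.rank_mul_le_left M E

set_option maxHeartbeats 4000000 in
theorem stmt_11 :
    (∀ a : Fin 4 → AlgebraicClosure (GaloisField 5 2), a ≠ 0 →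
      (MvPolynomial.eval a) (Qss.map (algebraMap (GaloisField 5 2) _)) = 0 →
      (MvPolynomial.eval a) (Pss.map (algebraMap (GaloisField 5 2) _)) = 0 →
      (Matrix.of ![fun i => (MvPolynomial.eval a)
          ((MvPolynomial.pderiv i Qss).map (algebraMap (GaloisField 5 2) _)),
        fun i => (MvPolynomial.eval a)
          ((MvPolynomial.pderiv i Pss).map (algebraMap (GaloisField 5 2) _))]).rank = 2) ∧
    (∀ i j k l i' j' k' l' : ℕ,
      0 < i → 0 < j → 0 < k → 0 < l → 0 < i' → 0 < j' → 0 < k' → 0 < l' →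
      i + j + k + l = 5 → i' + j' + k' + l' = 5 →
      MvPolynomial.coeff (expVec (5 * i - i') (5 * j - j') (5 * k - k') (5 * l - l'))
        ((Qss * Pss) ^ 4) = 0) := by
  constructor
  · -- non-singularity
    intro a ha hQ hP
    have h2 : (2 : AlgebraicClosure (GaloisField 5 2)) ≠ 0 := by
      intro h
      have : (5:ℕ) ∣ 2 := (CharP.cast_eq_zero_iff (AlgebraicClosure (GaloisField 5 2)) 5 2).1 (by exact_mod_cast h)
      omega
    have h3 : (3 : AlgebraicClosure (GaloisField 5 2)) ≠ 0 := by
      intro h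
      have : (5:ℕ) ∣ 3 := (CharP.cast_eq_zero_iff (AlgebraicClosure (GaloisField 5 2)) 5 3).1 (by exact_mod_cast h)
      omega
    have hQ' : 2 * (a 1 * a 3) + a 2 ^ 2 = 0 := by
      simpa [Qss, smul_eq_C_mul, map_ofNat] using hQ
    have hP' : a 0 ^ 3 + a 1 ^ 3 + a 3 ^ 3 = 0 := by
      simpa [Pss, map_ofNat] using hP
    by_cases hx : a 0 = 0
    · by_cases hz : a 2 = 0
      · exfalso
        have hyw : a 1 * a 3 = 0 := by
          have : 2 * (a 1 * a 3) = 0 := by simpa [hz] using hQ'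
          exact (mul_eq_zero.1 this).resolve_left h2
        have hboth : a 1 = 0 ∧ a 3 = 0 := by
          rcases mul_eq_zero.1 hyw with hy | hw
          · have : a 3 ^ 3 = 0 := by
              have := hP'; rw [hx, hy] at this; simpa using this
            exact ⟨hy, pow_eq_zero_iff (by norm_num : (3:ℕ) ≠ 0) |>.1 this⟩
          · have : a 1 ^ 3 = 0 := by
              have := hP'; rw [hx, hw] at this; simpa using this
            exact ⟨pow_eq_zero_iff (by norm_num : (3:ℕ) ≠ 0) |>.1 this, hw⟩
        apply ha
        funext i
        fin_cases i <;> simp [hx, hboth.1, hz, hboth.2]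
      · by_cases hy : a 1 = 0
        · exfalso
          apply hz
          have : a 2 ^ 2 = 0 := by simpa [hy] using hQ'
          exact pow_eq_zero_iff (by norm_num : (2:ℕ) ≠ 0) |>.1 this
        · -- minor from columns 2 and 1 : 2z·3y² ≠ 0
          apply rank_two _ 2 1
          simp only [Matrix.of_apply, Matrix.cons_val_zero, Matrix.cons_val_one, Matrix.head_cons]
          simp [Qss, Pss, smul_eq_C_mul, pderiv_C_mul, pderiv_two, map_ofNat,
            mul_eq_zero, pow_eq_zero_iff, hy, hz]
          exact ⟨h2, h3⟩
    · by_cases hw : a 3 = 0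
      · by_cases hy : a 1 = 0
        · exfalso
          apply hx
          have : a 0 ^ 3 = 0 := by
            have := hP'; rw [hy, hw] at this; simpa using this
          exact pow_eq_zero_iff (by norm_num : (3:ℕ) ≠ 0) |>.1 this
        · -- minor from columns 3 and 0 : 2y·3x² ≠ 0
          apply rank_two _ 3 0
          simp only [Matrix.of_apply, Matrix.cons_val_zero, Matrix.cons_val_one, Matrix.head_cons]
          simp [Qss, Pss, smul_eq_C_mul, pderiv_C_mul, pderiv_two, map_ofNat,
            mul_eq_zero, pow_eq_zero_iff, hy, hx]
          exact ⟨h2, h3⟩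
      · -- minor from columns 1 and 0 : 2w·3x² ≠ 0
        apply rank_two _ 1 0
        simp only [Matrix.of_apply, Matrix.cons_val_zero, Matrix.cons_val_one, Matrix.head_cons]
        simp [Qss, Pss, smul_eq_C_mul, pderiv_C_mul, pderiv_two, map_ofNat,
          mul_eq_zero, pow_eq_zero_iff, hw, hx]
        exact ⟨h2, h3⟩
  · intro i j k l i' j' k' l' hi hj hk hl hi' hj' hk' hl' hs hs'
    rw [mul_pow, q4, p4]
    simp only [mon, add_mul, mul_add, monomial_mul, expVec_add, coeff_add, coeff_monomial,
      expVec_eq_iff]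
    rcases (show i = 1 ∨ i = 2 by omega) with rfl | rfl <;>
    rcases (show j = 1 ∨ j = 2 by omega) with rfl | rfl <;>
    rcases (show k = 1 ∨ k = 2 by omega) with rfl | rfl <;>
    rcases (show l = 1 ∨ l = 2 by omega) with rfl | rfl <;>
    rcases (show i' = 1 ∨ i' = 2 by omega) with rfl | rfl <;>
    rcases (show j' = 1 ∨ j' = 2 by omega) with rfl | rfl <;>
    rcases (show k' = 1 ∨ k' = 2 by omega) with rfl | rfl <;>
    rcases (show l' = 1 ∨ l' = 2 by omega) with rfl | rfl <;>
    first
    | (exfalso; omega)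
    | norm_num
end
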